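/- Let F be a finite extension of Q_p with ring of integers O and uniformizer ϖ. Let G_{v0}(k) be the group of matrices in GL_2(O) congruent to the identity modulo ϖ^k, and G_{v1}(k) = diag(ϖ,1) · G_{v0}(k) · diag(ϖ,1)^{-1}. Then the group generated by G_{v0}(k) and G_{v1}(k) equals the set H of matrices [[1+ϖ^k a, ϖ^k b],[ϖ^{k-1} c, 1+ϖ^k d]] with a,b,c,d ∈ O. -/

import Mathlib

open Matrix Pointwise
open scoped OnePoint

noncomputable section

/-- `ϖ` is a uniformizer of the nonarchimedean field `F`. -/
def IsUniformizer (F : Type*) [NormedField F] (ϖ : F) : Prop :=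
  ϖ ≠ 0 ∧ ‖ϖ‖ < 1 ∧ ∀ x : F, ‖x‖ < 1 → ‖x‖ ≤ ‖ϖ‖

/-- The principal congruence subgroup `G_{v₀}(k)` of level `k`: matrices in `GL₂(𝒪)`
congruent to the identity modulo `ϖ^k` (entrywise, each entry of `g - 1` lies in `ϖ^k 𝒪`,
i.e. has norm at most `‖ϖ‖^k`). -/
def Gv0 (F : Type*) [NormedField F] (ϖ : F) (k : ℕ) : Set (GL (Fin 2) F) :=
  {g | ‖(g : Matrix (Fin 2) (Fin 2) F) 0 0 - 1‖ ≤ ‖ϖ‖ ^ k ∧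
       ‖(g : Matrix (Fin 2) (Fin 2) F) 0 1‖ ≤ ‖ϖ‖ ^ k ∧
       ‖(g : Matrix (Fin 2) (Fin 2) F) 1 0‖ ≤ ‖ϖ‖ ^ k ∧
       ‖(g : Matrix (Fin 2) (Fin 2) F) 1 1 - 1‖ ≤ ‖ϖ‖ ^ k}

/-- The diagonal matrix `diag(ϖ, 1)` as an element of `GL₂(F)`. -/
def dmat (F : Type*) [Field F] (ϖ : F) (h : ϖ ≠ 0) : GL (Fin 2) F :=
  Matrix.GeneralLinearGroup.mkOfDetNeZero !![ϖ, 0; 0, 1]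
    (by simpa [Matrix.det_fin_two_of] using h)

/-- `G_{v₁}(k) = diag(ϖ,1) · G_{v₀}(k) · diag(ϖ,1)⁻¹`. -/
def Gv1 (F : Type*) [NormedField F] (ϖ : F) (h : ϖ ≠ 0) (k : ℕ) : Set (GL (Fin 2) F) :=
  (fun g => dmat F ϖ h * g * (dmat F ϖ h)⁻¹) '' Gv0 F ϖ k

/-- The explicit set `H` of matrices `[[1+ϖ^k a, ϖ^k b],[ϖ^{k-1} c, 1+ϖ^k d]]`, `a,b,c,d ∈ 𝒪`;
this is the edge group `G_e(k)`. -/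
def Ge (F : Type*) [NormedField F] (ϖ : F) (k : ℕ) : Set (GL (Fin 2) F) :=
  {g | ‖(g : Matrix (Fin 2) (Fin 2) F) 0 0 - 1‖ ≤ ‖ϖ‖ ^ k ∧
       ‖(g : Matrix (Fin 2) (Fin 2) F) 0 1‖ ≤ ‖ϖ‖ ^ k ∧
       ‖(g : Matrix (Fin 2) (Fin 2) F) 1 0‖ ≤ ‖ϖ‖ ^ (k - 1) ∧
       ‖(g : Matrix (Fin 2) (Fin 2) F) 1 1 - 1‖ ≤ ‖ϖ‖ ^ k}

/-- The explicit description of `G_{v₁}(k)`: matrices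
`[[1+ϖ^k a, ϖ^{k+1} b],[ϖ^{k-1} c, 1+ϖ^k d]]` with `a,b,c,d ∈ 𝒪`. -/
def Gv1ex (F : Type*) [NormedField F] (ϖ : F) (k : ℕ) : Set (GL (Fin 2) F) :=
  {g | ‖(g : Matrix (Fin 2) (Fin 2) F) 0 0 - 1‖ ≤ ‖ϖ‖ ^ k ∧
       ‖(g : Matrix (Fin 2) (Fin 2) F) 0 1‖ ≤ ‖ϖ‖ ^ (k + 1) ∧
       ‖(g : Matrix (Fin 2) (Fin 2) F) 1 0‖ ≤ ‖ϖ‖ ^ (k - 1) ∧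
       ‖(g : Matrix (Fin 2) (Fin 2) F) 1 1 - 1‖ ≤ ‖ϖ‖ ^ k}

open scoped Classical in
/-- The right Möbius action of `g = [[a,b],[c,d]]` on `ℙ¹(F) = F ∪ {∞}` (here modelled as
`Option F`, with `none = ∞`): `z·g = (az+c)/(bz+d)`, `∞·g = a/b`, with value `∞` when the
denominator vanishes. -/
def moeb (F : Type*) [Field F] (g : Matrix (Fin 2) (Fin 2) F) : Option F → Option F
  | Option.some z => if g 0 1 * z + g 1 1 = 0 then Option.none
      else Option.some ((g 0 0 * z + g 1 0) / (g 0 1 * z + g 1 1))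
  | Option.none => if g 0 1 = 0 then Option.none else Option.some (g 0 0 / g 0 1)

/-- The orbit of `z ∈ ℙ¹(F)` under a set `S` of elements of `GL₂(F)` acting on the right by
Möbius transformations. -/
def orb (F : Type*) [Field F] (S : Set (GL (Fin 2) F)) (z : Option F) : Set (Option F) :=
  {w | ∃ g ∈ S, moeb F (g : Matrix (Fin 2) (Fin 2) F) z = w}

/-- `D` is an orbit of `S` on `ℙ¹(F)`. -/
def IsOrbit (F : Type*) [Field F] (S : Set (GL (Fin 2) F)) (D : Set (Option F)) : Prop :=
  ∃ z, D = orb F S z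

/-- The region `B_w(∞, |ϖ|) = {w ∈ ℙ¹(F) : |1/w| ≤ |ϖ|} = {|w| ≥ |ϖ|⁻¹} ∪ {∞}`. -/
def regionInfty (F : Type*) [NormedField F] (ϖ : F) : Set (Option F) :=
  {w | w = Option.none ∨ ∃ z : F, w = Option.some z ∧ ‖ϖ‖⁻¹ ≤ ‖z‖}

/-- The coordinate `1/w` on `ℙ¹(F)`, with `1/∞ = 0`. -/
def invc (F : Type*) [Field F] : Option F → F
  | Option.none => 0
  | Option.some z => z⁻¹

/-- The residue field of `F` has cardinality `q`: there are exactly `q` classes in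
`𝒪/(ϖ)`, witnessed by a set of representatives. -/
def ResidueCard (F : Type*) [NormedField F] (ϖ : F) (q : ℕ) : Prop :=
  ∃ s : Finset F, s.card = q ∧ (∀ x ∈ s, ‖x‖ ≤ 1) ∧
    ∀ x : F, ‖x‖ ≤ 1 → ∃! y, y ∈ s ∧ ‖x - y‖ ≤ ‖ϖ‖

/-- The conjugate `h S h⁻¹` of a set of matrices. -/
def conjSet (F : Type*) [Field F] (h : GL (Fin 2) F) (S : Set (GL (Fin 2) F)) :
    Set (GL (Fin 2) F) :=
  (fun g => h * g * h⁻¹) '' S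

/-- The matrix `g_α = [[1,0],[α,ϖ]]` as an element of `GL₂(F)`. -/
def galpha (F : Type*) [Field F] (ϖ α : F) (h : ϖ ≠ 0) : GL (Fin 2) F :=
  Matrix.GeneralLinearGroup.mkOfDetNeZero !![1, 0; α, ϖ]
    (by simpa [Matrix.det_fin_two_of] using h)

/-- The diagonal matrix `diag(1, ϖ^n)` as an element of `GL₂(F)`. -/
def dmatN (F : Type*) [Field F] (ϖ : F) (h : ϖ ≠ 0) (n : ℕ) : GL (Fin 2) F :=
  Matrix.GeneralLinearGroup.mkOfDetNeZero !![1, 0; 0, ϖ ^ n]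
    (by simpa [Matrix.det_fin_two_of] using pow_ne_zero n h)

set_option linter.unusedSectionVars false

section AuxUltra

variable {F : Type*} [NormedField F] [IsUltrametricDist F]

private lemma uadd (x y : F) : ‖x + y‖ ≤ max ‖x‖ ‖y‖ :=
  IsUltrametricDist.norm_add_le_max x y

private lemma uadd_le {x y : F} {t : ℝ} (hx : ‖x‖ ≤ t) (hy : ‖y‖ ≤ t) : ‖x + y‖ ≤ t :=
  (uadd x y).trans (max_le hx hy)

private lemma usub_le {x y : F} {t : ℝ} (hx : ‖x‖ ≤ t) (hy : ‖y‖ ≤ t) : ‖x - y‖ ≤ t := by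
  rw [sub_eq_add_neg]; exact uadd_le hx (by simpa using hy)

private lemma tri3 {a b c : F} {t : ℝ} (ha : ‖a‖ ≤ t) (hb : ‖b‖ ≤ t) (hc : ‖c‖ ≤ t) :
    ‖a + b + c‖ ≤ t := uadd_le (uadd_le ha hb) hc

private lemma mul_norm_le {x y : F} {s t : ℝ} (hx : ‖x‖ ≤ s) (hy : ‖y‖ ≤ t) :
    ‖x * y‖ ≤ s * t := by
  rw [norm_mul]
  exact mul_le_mul hx hy (norm_nonneg y) ((norm_nonneg x).trans hx)

private lemma norm_le_one_of {x : F} (h : ‖x - 1‖ ≤ 1) : ‖x‖ ≤ 1 := by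
  have h2 : ‖x - 1 + 1‖ ≤ max ‖x - 1‖ ‖(1 : F)‖ := uadd _ _
  rw [sub_add_cancel] at h2
  exact h2.trans (by simp [h])

private lemma norm_eq_one_of {x : F} (h : ‖x - 1‖ < 1) : ‖x‖ = 1 := by
  have h1 : ‖x‖ ≤ 1 := norm_le_one_of h.le
  have h2 : ‖x + (1 - x)‖ ≤ max ‖x‖ ‖1 - x‖ := uadd _ _
  rw [add_sub_cancel, norm_one] at h2
  rcases le_max_iff.mp h2 with h4 | h4
  · linarith
  · rw [norm_sub_rev] at h4; linarith

end AuxUltra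

section Main

variable {F : Type*} [NormedField F] [IsUltrametricDist F] {ϖ : F} {k : ℕ}

private lemma E_le_one (hϖ1 : ‖ϖ‖ < 1) : ‖ϖ‖ ^ k ≤ 1 :=
  pow_le_one₀ (norm_nonneg _) hϖ1.le

private lemma E_lt_one (hϖ1 : ‖ϖ‖ < 1) (hk : 1 ≤ k) : ‖ϖ‖ ^ k < 1 :=
  pow_lt_one₀ (norm_nonneg _) hϖ1 (by omega)

private lemma E_le_Em (hϖ1 : ‖ϖ‖ < 1) : ‖ϖ‖ ^ k ≤ ‖ϖ‖ ^ (k - 1) :=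
  pow_le_pow_of_le_one (norm_nonneg _) hϖ1.le (by omega)

private lemma EEm_le (hϖ1 : ‖ϖ‖ < 1) : ‖ϖ‖ ^ k * ‖ϖ‖ ^ (k - 1) ≤ ‖ϖ‖ ^ k :=
  mul_le_of_le_one_right (pow_nonneg (norm_nonneg _) _)
    (pow_le_one₀ (norm_nonneg _) hϖ1.le)

private lemma EmE_le (hϖ1 : ‖ϖ‖ < 1) : ‖ϖ‖ ^ (k - 1) * ‖ϖ‖ ^ k ≤ ‖ϖ‖ ^ k :=
  mul_le_of_le_one_left (pow_nonneg (norm_nonneg _) _)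
    (pow_le_one₀ (norm_nonneg _) hϖ1.le)

private lemma norm_diag_le_one (hϖ1 : ‖ϖ‖ < 1) {x : F} (h : ‖x - 1‖ ≤ ‖ϖ‖ ^ k) : ‖x‖ ≤ 1 :=
  norm_le_one_of (h.trans (E_le_one hϖ1))

private lemma norm_diag_eq_one (hϖ1 : ‖ϖ‖ < 1) (hk : 1 ≤ k) {x : F}
    (h : ‖x - 1‖ ≤ ‖ϖ‖ ^ k) : ‖x‖ = 1 :=
  norm_eq_one_of (h.trans_lt (E_lt_one hϖ1 hk))

private lemma mul_entry (g h : GL (Fin 2) F) (i j : Fin 2) :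
    ((g * h : GL (Fin 2) F) : Matrix (Fin 2) (Fin 2) F) i j =
      (g : Matrix (Fin 2) (Fin 2) F) i 0 * (h : Matrix (Fin 2) (Fin 2) F) 0 j +
      (g : Matrix (Fin 2) (Fin 2) F) i 1 * (h : Matrix (Fin 2) (Fin 2) F) 1 j := by
  rw [Matrix.GeneralLinearGroup.coe_mul, Matrix.mul_apply, Fin.sum_univ_two]

private lemma Ge_one_mem : (1 : GL (Fin 2) F) ∈ Ge F ϖ k := by
  refine ⟨?_, ?_, ?_, ?_⟩ <;>
    simp [Matrix.GeneralLinearGroup.coe_one, Matrix.one_apply, pow_nonneg (norm_nonneg ϖ)]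

private lemma Ge_mul_mem (hϖ1 : ‖ϖ‖ < 1) {g h : GL (Fin 2) F}
    (hg : g ∈ Ge F ϖ k) (hh : h ∈ Ge F ϖ k) : g * h ∈ Ge F ϖ k := by
  obtain ⟨hg1, hg2, hg3, hg4⟩ := hg
  obtain ⟨hh1, hh2, hh3, hh4⟩ := hh
  set A := (g : Matrix (Fin 2) (Fin 2) F) 0 0
  set B := (g : Matrix (Fin 2) (Fin 2) F) 0 1
  set C := (g : Matrix (Fin 2) (Fin 2) F) 1 0
  set D := (g : Matrix (Fin 2) (Fin 2) F) 1 1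
  set A' := (h : Matrix (Fin 2) (Fin 2) F) 0 0
  set B' := (h : Matrix (Fin 2) (Fin 2) F) 0 1
  set C' := (h : Matrix (Fin 2) (Fin 2) F) 1 0
  set D' := (h : Matrix (Fin 2) (Fin 2) F) 1 1
  have hA : ‖A‖ ≤ 1 := norm_diag_le_one hϖ1 hg1
  have hD : ‖D‖ ≤ 1 := norm_diag_le_one hϖ1 hg4
  have hA' : ‖A'‖ ≤ 1 := norm_diag_le_one hϖ1 hh1
  have hD' : ‖D'‖ ≤ 1 := norm_diag_le_one hϖ1 hh4
  refine ⟨?_, ?_, ?_, ?_⟩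
  · rw [mul_entry]
    have e : A * A' + B * C' - 1 = (A - 1) * A' + (A' - 1) + B * C' := by ring
    rw [e]
    refine tri3 ?_ hh1 ?_
    · simpa using mul_norm_le hg1 hA'
    · exact (mul_norm_le hg2 hh3).trans (EEm_le hϖ1)
  · rw [mul_entry]
    refine uadd_le ?_ ?_
    · simpa using mul_norm_le hA hh2
    · simpa using mul_norm_le hg2 hD'
  · rw [mul_entry]
    refine uadd_le ?_ ?_
    · simpa using mul_norm_le hg3 hA'
    · simpa using mul_norm_le hD hh3
  · rw [mul_entry]
    have e : C * B' + D * D' - 1 = (D - 1) * D' + (D' - 1) + C * B' := by ring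
    rw [e]
    refine tri3 ?_ hh4 ?_
    · simpa using mul_norm_le hg4 hD'
    · exact (mul_norm_le hg3 hh2).trans (EmE_le hϖ1)

private lemma Ge_inv_mem (hϖ1 : ‖ϖ‖ < 1) (hk : 1 ≤ k) {g : GL (Fin 2) F}
    (hg : g ∈ Ge F ϖ k) : g⁻¹ ∈ Ge F ϖ k := by
  obtain ⟨hg1, hg2, hg3, hg4⟩ := hg
  set A := (g : Matrix (Fin 2) (Fin 2) F) 0 0 with hAdef
  set B := (g : Matrix (Fin 2) (Fin 2) F) 0 1 with hBdef
  set C := (g : Matrix (Fin 2) (Fin 2) F) 1 0 with hCdef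
  set D := (g : Matrix (Fin 2) (Fin 2) F) 1 1 with hDdef
  have hA : ‖A‖ ≤ 1 := norm_diag_le_one hϖ1 hg1
  have hD : ‖D‖ ≤ 1 := norm_diag_le_one hϖ1 hg4
  set Δ := ((g : Matrix (Fin 2) (Fin 2) F)).det with hΔdef
  have hdet : Δ = A * D - B * C := by rw [hΔdef, Matrix.det_fin_two]
  have hΔ1 : ‖Δ - 1‖ ≤ ‖ϖ‖ ^ k := by
    have e : Δ - 1 = (A - 1) * D + (D - 1) + -(B * C) := by rw [hdet]; ring
    rw [e]
    refine tri3 ?_ hg4 ?_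
    · simpa using mul_norm_le hg1 hD
    · rw [norm_neg]
      exact (mul_norm_le hg2 hg3).trans (EEm_le hϖ1)
  have hΔnorm : ‖Δ‖ = 1 := norm_eq_one_of (hΔ1.trans_lt (E_lt_one hϖ1 hk))
  have hΔ0 : Δ ≠ 0 := by
    intro h0; rw [h0, norm_zero] at hΔnorm; linarith
  have hinv : ((g⁻¹ : GL (Fin 2) F) : Matrix (Fin 2) (Fin 2) F) = Δ⁻¹ • !![D, -B; -C, A] := by
    rw [Matrix.GeneralLinearGroup.coe_inv, Matrix.inv_def, Matrix.adjugate_fin_two,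
      Ring.inverse_eq_inv]
  have hΔinv : ‖Δ⁻¹‖ = 1 := by rw [norm_inv, hΔnorm]; norm_num
  refine ⟨?_, ?_, ?_, ?_⟩
  · rw [hinv]
    have e : (Δ⁻¹ • !![D, -B; -C, A]) 0 0 - 1 = Δ⁻¹ * (D - Δ) := by
      rw [Matrix.smul_apply]
      simp only [Matrix.cons_val', Matrix.cons_val_zero, Matrix.empty_val',
        Matrix.cons_val_fin_one, smul_eq_mul]
      field_simp
      simp
    rw [e, norm_mul, hΔinv, one_mul]
    have e2 : D - Δ = (D - 1) - (Δ - 1) := by ring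
    rw [e2]
    exact usub_le hg4 hΔ1
  · rw [hinv]
    have e : (Δ⁻¹ • !![D, -B; -C, A]) 0 1 = Δ⁻¹ * (-B) := by
      rw [Matrix.smul_apply]; simp [smul_eq_mul]
    rw [e, norm_mul, hΔinv, one_mul, norm_neg]
    exact hg2
  · rw [hinv]
    have e : (Δ⁻¹ • !![D, -B; -C, A]) 1 0 = Δ⁻¹ * (-C) := by
      rw [Matrix.smul_apply]; simp [smul_eq_mul]
    rw [e, norm_mul, hΔinv, one_mul, norm_neg]
    exact hg3
  · rw [hinv]
    have e : (Δ⁻¹ • !![D, -B; -C, A]) 1 1 - 1 = Δ⁻¹ * (A - Δ) := by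
      rw [Matrix.smul_apply]
      simp only [Matrix.cons_val', Matrix.cons_val_zero, Matrix.cons_val_one,
        Matrix.head_cons, Matrix.head_fin_const, Matrix.empty_val',
        Matrix.cons_val_fin_one, smul_eq_mul]
      field_simp
      simp
    rw [e, norm_mul, hΔinv, one_mul]
    have e2 : A - Δ = (A - 1) - (Δ - 1) := by ring
    rw [e2]
    exact usub_le hg1 hΔ1

private lemma dmat_inv_coe (hϖ0 : ϖ ≠ 0) :
    (((dmat F ϖ hϖ0)⁻¹ : GL (Fin 2) F) : Matrix (Fin 2) (Fin 2) F) = !![ϖ⁻¹, 0; 0, 1] := by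
  rw [Matrix.GeneralLinearGroup.coe_inv]
  apply Matrix.inv_eq_right_inv
  show (!![ϖ, 0; 0, 1] : Matrix (Fin 2) (Fin 2) F) * _ = 1
  ext i j
  fin_cases i <;> fin_cases j <;>
    simp [Matrix.mul_apply, Fin.sum_univ_two, Matrix.one_apply, mul_inv_cancel₀ hϖ0]

private lemma conj_entries (hϖ0 : ϖ ≠ 0) (h : GL (Fin 2) F) :
    ((dmat F ϖ hϖ0 * h * (dmat F ϖ hϖ0)⁻¹ : GL (Fin 2) F) : Matrix (Fin 2) (Fin 2) F) =
      !![(h : Matrix (Fin 2) (Fin 2) F) 0 0, ϖ * (h : Matrix (Fin 2) (Fin 2) F) 0 1;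
         (h : Matrix (Fin 2) (Fin 2) F) 1 0 * ϖ⁻¹, (h : Matrix (Fin 2) (Fin 2) F) 1 1] := by
  rw [Matrix.GeneralLinearGroup.coe_mul, Matrix.GeneralLinearGroup.coe_mul, dmat_inv_coe hϖ0]
  show (!![ϖ, 0; 0, 1] : Matrix (Fin 2) (Fin 2) F) * _ * _ = _
  ext i j
  rw [Matrix.mul_apply, Fin.sum_univ_two, Matrix.mul_apply, Fin.sum_univ_two,
    Matrix.mul_apply, Fin.sum_univ_two]
  fin_cases i <;> fin_cases j <;>
    · simp
      try field_simp
      try ring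

end Main

theorem statement0 (p : ℕ) [Fact p.Prime] (F : Type*) [NontriviallyNormedField F]
    [IsUltrametricDist F] [NormedAlgebra ℚ_[p] F] [FiniteDimensional ℚ_[p] F]
    (ϖ : F) (hϖ : IsUniformizer F ϖ) (k : ℕ) (hk : 1 ≤ k) :
    ((Subgroup.closure (Gv0 F ϖ k ∪ Gv1 F ϖ hϖ.1 k) : Subgroup (GL (Fin 2) F)) :
      Set (GL (Fin 2) F)) = Ge F ϖ k := by
  have hϖ0 : ϖ ≠ 0 := hϖ.1
  have hϖ1 : ‖ϖ‖ < 1 := hϖ.2.1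
  obtain ⟨m, rfl⟩ : ∃ m, k = m + 1 := ⟨k - 1, by omega⟩
  set k := m + 1
  have hkm : k - 1 = m := rfl
  let H : Subgroup (GL (Fin 2) F) :=
    { carrier := Ge F ϖ k
      one_mem' := Ge_one_mem
      mul_mem' := fun ha hb => Ge_mul_mem hϖ1 ha hb
      inv_mem' := fun ha => Ge_inv_mem hϖ1 hk ha }
  apply Set.Subset.antisymm
  · have hsub : Gv0 F ϖ k ∪ Gv1 F ϖ hϖ0 k ⊆ H.carrier := by
      rintro g (hg | ⟨h, hh, rfl⟩)
      · obtain ⟨h1, h2, h3, h4⟩ := hg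
        exact ⟨h1, h2, h3.trans (E_le_Em hϖ1), h4⟩
      · obtain ⟨h1, h2, h3, h4⟩ := hh
        have hc := conj_entries hϖ0 h
        refine ⟨?_, ?_, ?_, ?_⟩ <;> rw [hc]
        · simpa using h1
        · show ‖ϖ * (h : Matrix (Fin 2) (Fin 2) F) 0 1‖ ≤ ‖ϖ‖ ^ k
          rw [norm_mul]
          calc ‖ϖ‖ * ‖(h : Matrix (Fin 2) (Fin 2) F) 0 1‖ ≤ ‖ϖ‖ * ‖ϖ‖ ^ k :=
                mul_le_mul_of_nonneg_left h2 (norm_nonneg ϖ)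
            _ ≤ 1 * ‖ϖ‖ ^ k := by
                have := pow_nonneg (norm_nonneg ϖ) k
                nlinarith
            _ = ‖ϖ‖ ^ k := one_mul _
        · show ‖(h : Matrix (Fin 2) (Fin 2) F) 1 0 * ϖ⁻¹‖ ≤ ‖ϖ‖ ^ (k - 1)
          rw [norm_mul, norm_inv, hkm]
          have hq : (0:ℝ) < ‖ϖ‖ := norm_pos_iff.mpr hϖ0
          calc ‖(h : Matrix (Fin 2) (Fin 2) F) 1 0‖ * ‖ϖ‖⁻¹ ≤ ‖ϖ‖ ^ k * ‖ϖ‖⁻¹ :=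
                mul_le_mul_of_nonneg_right h3 (by positivity)
            _ = ‖ϖ‖ ^ m := by
                rw [pow_succ, mul_assoc, mul_inv_cancel₀ hq.ne', mul_one]
        · simpa using h4
    intro g hg
    exact (Subgroup.closure_le H).mpr hsub hg
  · intro g hg
    obtain ⟨hg1, hg2, hg3, hg4⟩ := hg
    set A := (g : Matrix (Fin 2) (Fin 2) F) 0 0 with hAdef
    set B := (g : Matrix (Fin 2) (Fin 2) F) 0 1 with hBdef
    set C := (g : Matrix (Fin 2) (Fin 2) F) 1 0 with hCdef
    set D := (g : Matrix (Fin 2) (Fin 2) F) 1 1 with hDdef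
    have hA1 : ‖A‖ = 1 := norm_diag_eq_one hϖ1 hk hg1
    have hA0 : A ≠ 0 := by intro h0; rw [h0, norm_zero] at hA1; linarith
    set c : F := C * A⁻¹ with hcdef
    have hcnorm : ‖c‖ ≤ ‖ϖ‖ ^ (k - 1) := by
      rw [hcdef, norm_mul, norm_inv, hA1]
      simpa using hg3
    have hdetg0 : (!![1, 0; ϖ * c, 1] : Matrix (Fin 2) (Fin 2) F).det ≠ 0 := by
      simp [Matrix.det_fin_two_of]
    set g0 : GL (Fin 2) F := Matrix.GeneralLinearGroup.mkOfDetNeZero _ hdetg0 with hg0def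
    have hg0coe : (g0 : Matrix (Fin 2) (Fin 2) F) = !![1, 0; ϖ * c, 1] := rfl
    have hg0mem : g0 ∈ Gv0 F ϖ k := by
      have hE0 : (0:ℝ) ≤ ‖ϖ‖ ^ k := pow_nonneg (norm_nonneg _) _
      have h10 : ‖ϖ * c‖ ≤ ‖ϖ‖ ^ k := by
        rw [norm_mul]
        calc ‖ϖ‖ * ‖c‖ ≤ ‖ϖ‖ * ‖ϖ‖ ^ (k - 1) :=
              mul_le_mul_of_nonneg_left hcnorm (norm_nonneg ϖ)
          _ = ‖ϖ‖ ^ k := by rw [hkm, pow_succ]; ring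
      refine ⟨?_, ?_, ?_, ?_⟩ <;> rw [hg0coe]
      · simpa using hE0
      · simpa using hE0
      · simpa using h10
      · simpa using hE0
    set l := dmat F ϖ hϖ0 * g0 * (dmat F ϖ hϖ0)⁻¹ with hldef
    have hlmem : l ∈ Gv1 F ϖ hϖ0 k := ⟨g0, hg0mem, rfl⟩
    have hlcoe : (l : Matrix (Fin 2) (Fin 2) F) = !![1, 0; c, 1] := by
      rw [hldef, conj_entries hϖ0, hg0coe]
      ext i j
      fin_cases i <;> fin_cases j <;>
        simp [mul_comm ϖ c, mul_inv_cancel_right₀ hϖ0]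
    have hlinvcoe : ((l⁻¹ : GL (Fin 2) F) : Matrix (Fin 2) (Fin 2) F) = !![1, 0; -c, 1] := by
      rw [Matrix.GeneralLinearGroup.coe_inv, hlcoe]
      apply Matrix.inv_eq_right_inv
      ext i j
      fin_cases i <;> fin_cases j <;>
        simp [Matrix.mul_apply, Fin.sum_univ_two, Matrix.one_apply]
    have hv : l⁻¹ * g ∈ Gv0 F ϖ k := by
      refine ⟨?_, ?_, ?_, ?_⟩ <;> rw [mul_entry, hlinvcoe]
      · show ‖!![(1:F), 0; -c, 1] 0 0 * A + !![(1:F), 0; -c, 1] 0 1 * C - 1‖ ≤ _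
        simpa using hg1
      · show ‖!![(1:F), 0; -c, 1] 0 0 * B + !![(1:F), 0; -c, 1] 0 1 * D‖ ≤ _
        simpa using hg2
      · show ‖!![(1:F), 0; -c, 1] 1 0 * A + !![(1:F), 0; -c, 1] 1 1 * C‖ ≤ _
        have hz : !![(1:F), 0; -c, 1] 1 0 * A + !![(1:F), 0; -c, 1] 1 1 * C = 0 := by
          simp [hcdef]
          field_simp
          ring
        rw [hz, norm_zero]
        positivity
      · show ‖!![(1:F), 0; -c, 1] 1 0 * B + !![(1:F), 0; -c, 1] 1 1 * D - 1‖ ≤ _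
        have he : !![(1:F), 0; -c, 1] 1 0 * B + !![(1:F), 0; -c, 1] 1 1 * D - 1 =
            (D - 1) + -(c * B) := by simp; ring
        rw [he]
        refine uadd_le hg4 ?_
        rw [norm_neg]
        exact (mul_norm_le hcnorm hg2).trans (EmE_le hϖ1)
    have hgl : g = l * (l⁻¹ * g) := (mul_inv_cancel_left l g).symm
    rw [hgl]
    exact Subgroup.mul_mem _
      (Subgroup.subset_closure (Or.inr hlmem))
      (Subgroup.subset_closure (Or.inl hv))
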